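/- Let R_1,...,R_m be nonzero real polynomials with pairwise distinct degrees, and let l_1,...,l_m be pairwise distinct real numbers. Then the polynomial x ↦ det(R_i(x - l_j))_{i,j=1}^m has degree exactly (Σ_{i=1}^m deg R_i) - binom(m,2). -/

import Mathlib

open Polynomial Finset

lemma hasse_zero {p : ℝ[X]} {k : ℕ} (h : p.natDegree < k) : Polynomial.hasseDeriv k p = 0 := by
  ext n
  rw [Polynomial.hasseDeriv_coeff,
    Polynomial.coeff_eq_zero_of_natDegree_lt (lt_of_lt_of_le h (Nat.le_add_left k n)),
    mul_zero, Polynomial.coeff_zero]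

lemma coeff_prod_of_le {ι : Type*} (s : Finset ι) (f : ι → ℝ[X]) (e : ι → ℕ)
    (h : ∀ i ∈ s, (f i).natDegree ≤ e i) :
    (∏ i ∈ s, f i).coeff (∑ i ∈ s, e i) = ∏ i ∈ s, (f i).coeff (e i) := by
  induction s using Finset.cons_induction with
  | empty => simp
  | cons a s ha ih =>
    rw [Finset.prod_cons, Finset.sum_cons,
      Polynomial.coeff_mul_add_eq_of_natDegree_le (h a (Finset.mem_cons_self a s))
        ((Polynomial.natDegree_prod_le _ _).trans
          (Finset.sum_le_sum (fun i hi => h i (Finset.mem_cons_of_mem hi)))),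
      ih (fun i hi => h i (Finset.mem_cons_of_mem hi)), Finset.prod_cons]

lemma det_hasse_degree_le {m : ℕ} (R : Fin m → ℝ[X]) (r : Fin m → ℕ) :
    (Matrix.det (Matrix.of fun j i : Fin m => Polynomial.hasseDeriv (r j) (R i))).degree
      ≤ (((∑ i, (R i).natDegree) - ∑ j, r j : ℕ) : WithBot ℕ) := by
  rw [Matrix.det_apply']
  refine (Polynomial.degree_sum_le _ _).trans (Finset.sup_le fun σ _ => ?_)
  refine (Polynomial.degree_mul_le _ _).trans ?_
  by_cases hok : ∀ i, r (σ i) ≤ (R i).natDegree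
  · have h2 : (∏ i, Polynomial.hasseDeriv (r (σ i)) ((Matrix.of fun j i : Fin m =>
        Polynomial.hasseDeriv (r j) (R i)) (σ i) i : ℝ[X]) : ℝ[X]) = 0 ∨ True := Or.inr trivial
    have hsum : ∑ i, ((R i).natDegree - r (σ i)) = (∑ i, (R i).natDegree) - ∑ j, r j := by
      have hA : ∑ i, ((R i).natDegree - r (σ i)) + ∑ i, r (σ i) = ∑ i, (R i).natDegree := by
        rw [← Finset.sum_add_distrib]
        exact Finset.sum_congr rfl fun i _ => Nat.sub_add_cancel (hok i)
      have hB : ∑ i, r (σ i) = ∑ j, r j := Equiv.sum_comp σ r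
      omega
    have hprod : (∏ i, (Matrix.of fun j i : Fin m =>
          Polynomial.hasseDeriv (r j) (R i)) (σ i) i).degree
        ≤ ((∑ i, ((R i).natDegree - r (σ i)) : ℕ) : WithBot ℕ) := by
      rw [Nat.cast_sum]
      refine (Polynomial.degree_prod_le _ _).trans (Finset.sum_le_sum fun i _ => ?_)
      exact (Polynomial.degree_le_natDegree).trans
        (WithBot.coe_le_coe.2 (Polynomial.natDegree_hasseDeriv_le _ _))
    calc _ ≤ 0 + ((∑ i, ((R i).natDegree - r (σ i)) : ℕ) : WithBot ℕ) :=
          add_le_add (Polynomial.degree_intCast_le _) hprod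
      _ = _ := by rw [zero_add, hsum]
  · push_neg at hok
    obtain ⟨i, hi⟩ := hok
    have hz : (∏ i, (Matrix.of fun j i : Fin m =>
        Polynomial.hasseDeriv (r j) (R i)) (σ i) i) = 0 :=
      Finset.prod_eq_zero (Finset.mem_univ i) (hasse_zero hi)
    rw [hz, Polynomial.degree_zero, WithBot.add_bot]
    exact bot_le

lemma det_hasse_zero {m : ℕ} (R : Fin m → ℝ[X]) (r : Fin m → ℕ)
    (h : ∑ i, (R i).natDegree < ∑ j, r j) :
    (Matrix.det (Matrix.of fun j i : Fin m => Polynomial.hasseDeriv (r j) (R i))) = 0 := by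
  rw [Matrix.det_apply']
  refine Finset.sum_eq_zero fun σ _ => ?_
  by_cases hok : ∀ i, r (σ i) ≤ (R i).natDegree
  · exfalso
    have hB : ∑ i, r (σ i) = ∑ j, r j := Equiv.sum_comp σ r
    have := Finset.sum_le_sum (fun i (_ : i ∈ Finset.univ) => hok i)
    omega
  · push_neg at hok
    obtain ⟨i, hi⟩ := hok
    have hz : (∏ i, (Matrix.of fun j i : Fin m =>
        Polynomial.hasseDeriv (r j) (R i)) (σ i) i) = 0 :=
      Finset.prod_eq_zero (Finset.mem_univ i) (hasse_zero hi)
    rw [hz, mul_zero]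

lemma sum_fin_val {m : ℕ} : ∑ k : Fin m, (k : ℕ) = m.choose 2 := by
  rw [Fin.sum_univ_eq_sum_range (fun i => i) m, Finset.sum_range_id, Nat.choose_two_right]

lemma coeff_det_G' {m : ℕ} (R : Fin m → ℝ[X]) :
    (Matrix.det (Matrix.of fun k i : Fin m => Polynomial.hasseDeriv (k : ℕ) (R i))).coeff
        ((∑ i, (R i).natDegree) - m.choose 2)
      = Matrix.det (Matrix.of fun k i : Fin m =>
          (((R i).natDegree.choose (k : ℕ) : ℝ) * (R i).leadingCoeff)) := by
  rw [Matrix.det_apply', Matrix.det_apply', Polynomial.finset_sum_coeff]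
  refine Finset.sum_congr rfl fun τ _ => ?_
  rw [show ((Equiv.Perm.sign τ : ℤ) : ℝ[X]) = Polynomial.C ((Equiv.Perm.sign τ : ℤ) : ℝ) by
      rw [Polynomial.C_eq_intCast], Polynomial.coeff_C_mul]
  congr 1
  by_cases hok : ∀ i, ((τ i : Fin m) : ℕ) ≤ (R i).natDegree
  · have hτ : ∑ i, ((τ i : Fin m) : ℕ) = m.choose 2 := by
      rw [Equiv.sum_comp τ (fun i : Fin m => (i : ℕ)), sum_fin_val]
    have hsum : ∑ i, ((R i).natDegree - ((τ i : Fin m) : ℕ))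
        = (∑ i, (R i).natDegree) - m.choose 2 := by
      have hA : ∑ i, ((R i).natDegree - ((τ i : Fin m) : ℕ)) + ∑ i, ((τ i : Fin m) : ℕ)
          = ∑ i, (R i).natDegree := by
        rw [← Finset.sum_add_distrib]
        exact Finset.sum_congr rfl fun i _ => Nat.sub_add_cancel (hok i)
      omega
    simp only [Matrix.of_apply]
    rw [← hsum, coeff_prod_of_le _ _ _
      (fun i _ => Polynomial.natDegree_hasseDeriv_le _ _)]
    refine Finset.prod_congr rfl fun i _ => ?_
    rw [Polynomial.hasseDeriv_coeff, Nat.sub_add_cancel (hok i)]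
    rfl
  · push_neg at hok
    obtain ⟨i, hi⟩ := hok
    have hz1 : (∏ i, (Matrix.of fun k i : Fin m =>
        Polynomial.hasseDeriv (k : ℕ) (R i)) (τ i) i) = 0 :=
      Finset.prod_eq_zero (Finset.mem_univ i) (hasse_zero hi)
    have hz2 : (∏ i, (Matrix.of fun k i : Fin m =>
        (((R i).natDegree.choose (k : ℕ) : ℝ) * (R i).leadingCoeff)) (τ i) i) = 0 :=
      Finset.prod_eq_zero (Finset.mem_univ i) (by
        rw [Matrix.of_apply, Nat.choose_eq_zero_of_lt hi, Nat.cast_zero, zero_mul])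
    rw [hz1, hz2, Polynomial.coeff_zero]

lemma detT_ne {m : ℕ} (R : Fin m → ℝ[X]) (hR0 : ∀ i, R i ≠ 0)
    (hdeg : Function.Injective fun i => (R i).natDegree) :
    Matrix.det (Matrix.of fun k i : Fin m =>
      (((R i).natDegree.choose (k : ℕ) : ℝ) * (R i).leadingCoeff)) ≠ 0 := by
  have hchoose : ∀ (a b : ℕ), ((a.choose b : ℕ) : ℝ)
      = ((b.factorial : ℕ) : ℝ)⁻¹ * (descPochhammer ℝ b).eval ((a : ℕ) : ℝ) := by
    intro a b
    rw [descPochhammer_eval_eq_descFactorial, Nat.descFactorial_eq_factorial_mul_choose]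
    push_cast
    rw [← mul_assoc, inv_mul_cancel₀ (by exact_mod_cast b.factorial_ne_zero), one_mul]
  have h1 : (Matrix.of fun k i : Fin m =>
        (((R i).natDegree.choose (k : ℕ) : ℝ) * (R i).leadingCoeff))
      = Matrix.of fun k i : Fin m => (R i).leadingCoeff *
          ((((k : ℕ).factorial : ℕ) : ℝ)⁻¹ *
            (descPochhammer ℝ (k : ℕ)).eval (((R i).natDegree : ℕ) : ℝ)) := by
    ext k i
    rw [Matrix.of_apply, Matrix.of_apply, hchoose]
    ring
  rw [h1, Matrix.det_mul_row (fun i => (R i).leadingCoeff) (fun k i : Fin m =>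
      ((((k : ℕ).factorial : ℕ) : ℝ)⁻¹ *
        (descPochhammer ℝ (k : ℕ)).eval (((R i).natDegree : ℕ) : ℝ)))]
  have h2 : Matrix.det (fun k i : Fin m =>
        ((((k : ℕ).factorial : ℕ) : ℝ)⁻¹ *
          (descPochhammer ℝ (k : ℕ)).eval (((R i).natDegree : ℕ) : ℝ)))
      = (∏ k : Fin m, ((((k : ℕ).factorial : ℕ) : ℝ)⁻¹)) *
        Matrix.det (Matrix.of fun k i : Fin m =>
            (descPochhammer ℝ (k : ℕ)).eval (((R i).natDegree : ℕ) : ℝ)) :=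
    Matrix.det_mul_column _ _
  rw [h2]
  have h3 : (Matrix.of fun k i : Fin m =>
        (descPochhammer ℝ (k : ℕ)).eval (((R i).natDegree : ℕ) : ℝ)).det
      = (Matrix.of fun i k : Fin m =>
        (descPochhammer ℝ (k : ℕ)).eval (((R i).natDegree : ℕ) : ℝ)).det := by
    rw [← Matrix.det_transpose]
    rfl
  rw [h3, ← Matrix.det_eval_matrixOfPolynomials_eq_det_vandermonde
    (fun i => (((R i).natDegree : ℕ) : ℝ)) (fun k => descPochhammer ℝ (k : ℕ))
    (fun k => by simp) (fun k => by exact monic_descPochhammer ℝ (k : ℕ)),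
    Matrix.det_vandermonde]
  refine mul_ne_zero ?_ (mul_ne_zero ?_ ?_)
  · exact Finset.prod_ne_zero_iff.2 fun i _ => Polynomial.leadingCoeff_ne_zero.2 (hR0 i)
  · exact Finset.prod_ne_zero_iff.2 fun k _ =>
      inv_ne_zero (by exact_mod_cast (k : ℕ).factorial_ne_zero)
  · refine Finset.prod_ne_zero_iff.2 fun i _ => Finset.prod_ne_zero_iff.2 fun j hj => ?_
    have hij : i ≠ j := ne_of_lt (Finset.mem_Ioi.1 hj)
    exact sub_ne_zero.2 (fun h => hij (hdeg (by exact_mod_cast h.symm)))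

lemma sum_distinct_ge {m : ℕ} (g : Fin m → ℕ) (hg : Function.Injective g) :
    m.choose 2 ≤ ∑ j, g j ∧ ((∑ j, g j) = m.choose 2 → ∀ j, g j < m) := by
  classical
  set s : Finset ℕ := Finset.univ.image g with hs
  have hcard : s.card = m := by
    rw [hs, Finset.card_image_of_injective _ hg, Finset.card_univ, Fintype.card_fin]
  set f : Fin m ↪o ℕ := s.orderEmbOfFin hcard with hf
  have key : ∀ v : ℕ, ∀ h : v < m, v ≤ f ⟨v, h⟩ := by
    intro v
    induction v with
    | zero => exact fun _ => Nat.zero_le _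
    | succ n ih =>
      intro h
      have h' : n < m := Nat.lt_of_succ_lt h
      have h2 : f ⟨n, h'⟩ < f ⟨n + 1, h⟩ := f.strictMono (by simp [Fin.lt_def])
      have := ih h'
      omega
  have hkey : ∀ k : Fin m, (k : ℕ) ≤ f k := fun k => key k.1 k.2
  have hsum1 : ∑ j, g j = ∑ x ∈ s, x := by
    rw [hs, Finset.sum_image (fun x _ y _ h => hg h)]
  have hsimage : s = Finset.univ.image (fun k => (f k : ℕ)) := by
    have h1 := Finset.range_orderEmbOfFin s hcard
    ext x
    simp only [Finset.mem_image, Finset.mem_univ, true_and]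
    constructor
    · intro hx
      have hx' : x ∈ Set.range (⇑(s.orderEmbOfFin hcard)) := by rw [h1]; exact hx
      obtain ⟨k, hk⟩ := hx'
      exact ⟨k, hk⟩
    · rintro ⟨k, rfl⟩
      exact Finset.orderEmbOfFin_mem s hcard k
  have hsum2 : ∑ x ∈ s, x = ∑ k : Fin m, (f k : ℕ) := by
    rw [hsimage, Finset.sum_image (fun x _ y _ h => f.injective h)]
  have hchoose : ∑ k : Fin m, (k : ℕ) = m.choose 2 := by
    rw [Fin.sum_univ_eq_sum_range (fun i => i) m, Finset.sum_range_id, Nat.choose_two_right]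
  have hle : m.choose 2 ≤ ∑ j, g j := by
    calc m.choose 2 = ∑ k : Fin m, (k : ℕ) := hchoose.symm
      _ ≤ ∑ k : Fin m, (f k : ℕ) := Finset.sum_le_sum (fun k _ => hkey k)
      _ = ∑ j, g j := by rw [hsum1, hsum2]
  refine ⟨hle, fun heq j => ?_⟩
  have hpt : ∀ k : Fin m, (k : ℕ) = (f k : ℕ) := by
    have heq2 : ∑ k : Fin m, (k : ℕ) = ∑ k : Fin m, (f k : ℕ) := by
      rw [hchoose, ← heq, hsum1, hsum2]
    exact fun k => (Finset.sum_eq_sum_iff_of_le (fun k _ => hkey k)).1 heq2 k (Finset.mem_univ k)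
  have hmem : g j ∈ s := Finset.mem_image_of_mem g (Finset.mem_univ j)
  rw [hsimage] at hmem
  obtain ⟨k, _, hk⟩ := Finset.mem_image.1 hmem
  rw [← hk, ← hpt k]
  exact k.2

lemma comp_expand (p : ℝ[X]) (a : ℝ) {N : ℕ} (hN : p.natDegree < N) :
    p.comp (X - C a) = ∑ k ∈ Finset.range N, C ((-a) ^ k) * Polynomial.hasseDeriv k p := by
  have h1 : p.comp (X - C a) = Polynomial.taylor (-a) p := by
    rw [Polynomial.taylor_apply, Polynomial.C_neg, ← sub_eq_add_neg]
  ext n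
  rw [h1, Polynomial.taylor_coeff,
    Polynomial.eval_eq_sum_range' (lt_of_le_of_lt
      ((Polynomial.natDegree_hasseDeriv_le p n).trans (Nat.sub_le _ _)) hN) (-a),
    Polynomial.finset_sum_coeff]
  refine Finset.sum_congr rfl fun k _ => ?_
  rw [Polynomial.coeff_C_mul, Polynomial.hasseDeriv_coeff, Polynomial.hasseDeriv_coeff,
    Nat.add_comm k n, Nat.choose_symm_add]
  ring

/-- If R_1,...,R_m are nonzero real polynomials with pairwise distinct degrees and
l_1,...,l_m are pairwise distinct reals, then the polynomial
x => det(R_i(x - l_j)) has degree exactly (sum of the degrees) - binom(m,2). -/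
theorem casorati_det_degree (m : ℕ) (R : Fin m → Polynomial ℝ)
    (hR0 : ∀ i, R i ≠ 0)
    (hdeg : ∀ i j, i ≠ j → (R i).natDegree ≠ (R j).natDegree)
    (l : Fin m → ℝ) (hl : Function.Injective l) :
    (Matrix.det (Matrix.of fun i j : Fin m =>
        (R i).comp (Polynomial.X - Polynomial.C (l j)))).degree
      = (((∑ i, (R i).natDegree) - m.choose 2 : ℕ) : WithBot ℕ) := by
  classical
  have dinj : Function.Injective fun i => (R i).natDegree := by
    intro i j h
    by_contra hne
    exact hdeg i j hne h
  set S : ℕ := ∑ i, (R i).natDegree with hS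
  set K : ℕ := m.choose 2 with hK
  have hKS : K ≤ S := (sum_distinct_ge _ dinj).1
  set D : ℕ := S - K with hD
  set N : ℕ := m + S + 1 with hN
  have hdN : ∀ i, (R i).natDegree < N := by
    intro i
    have h1 : (R i).natDegree ≤ S := by
      rw [hS]
      exact Finset.single_le_sum (f := fun i => (R i).natDegree)
        (fun i _ => Nat.zero_le _) (Finset.mem_univ i)
    omega
  set H : (Fin m → ℕ) → Matrix (Fin m) (Fin m) ℝ[X] :=
    fun r => Matrix.of fun j i => Polynomial.hasseDeriv (r j) (R i) with hHdef
  -- expansion of the determinant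
  have hdet : (Matrix.det (Matrix.of fun i j : Fin m =>
        (R i).comp (Polynomial.X - Polynomial.C (l j))))
      = ∑ r ∈ Fintype.piFinset (fun _ : Fin m => Finset.range N),
          (Polynomial.C (∏ j, (-(l j)) ^ (r j))) * (H r).det := by
    rw [← Matrix.det_transpose]
    have htrans : (Matrix.of fun i j : Fin m =>
          (R i).comp (Polynomial.X - Polynomial.C (l j))).transpose
        = Matrix.of fun j i : Fin m => (R i).comp (Polynomial.X - Polynomial.C (l j)) := rfl
    rw [htrans]
    have hrows : (Matrix.of fun j i : Fin m =>
          (R i).comp (Polynomial.X - Polynomial.C (l j)))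
        = (fun j => ∑ k ∈ Finset.range N, (fun i =>
            Polynomial.C ((-(l j)) ^ k) * Polynomial.hasseDeriv k (R i))) := by
      funext j i
      rw [Finset.sum_apply]
      exact comp_expand (R i) (l j) (hdN i)
    rw [hrows]
    have hmap : Matrix.det (fun j => ∑ k ∈ Finset.range N, (fun i =>
            Polynomial.C ((-(l j)) ^ k) * Polynomial.hasseDeriv k (R i)))
        = ∑ r ∈ Fintype.piFinset (fun _ : Fin m => Finset.range N),
            Matrix.det (fun j i => Polynomial.C ((-(l j)) ^ (r j)) *
              Polynomial.hasseDeriv (r j) (R i)) :=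
      (Matrix.detRowAlternating (R := ℝ[X]) (n := Fin m)).toMultilinearMap.map_sum_finset
        (g := fun (j : Fin m) (k : ℕ) => (fun i =>
          Polynomial.C ((-(l j)) ^ k) * Polynomial.hasseDeriv k (R i)))
        (A := fun _ : Fin m => Finset.range N)
    rw [hmap]
    refine Finset.sum_congr rfl fun r _ => ?_
    have hcol : Matrix.det (fun j i : Fin m => Polynomial.C ((-(l j)) ^ (r j)) *
          Polynomial.hasseDeriv (r j) (R i))
        = (∏ j, Polynomial.C ((-(l j)) ^ (r j))) * (H r).det :=
      Matrix.det_mul_column _ _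
    rw [hcol, ← map_prod]
  -- Part 1 : degree bound
  have hdegle : (Matrix.det (Matrix.of fun i j : Fin m =>
        (R i).comp (Polynomial.X - Polynomial.C (l j)))).degree ≤ (D : WithBot ℕ) := by
    rw [hdet]
    refine (Polynomial.degree_sum_le _ _).trans (Finset.sup_le fun r _ => ?_)
    by_cases hrinj : Function.Injective r
    · refine (Polynomial.degree_mul_le _ _).trans ?_
      have h2 : ((H r).det).degree ≤ ((S - ∑ j, r j : ℕ) : WithBot ℕ) :=
        det_hasse_degree_le R r
      have h3 : (S - ∑ j, r j : ℕ) ≤ D := by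
        have := (sum_distinct_ge r hrinj).1
        omega
      calc Polynomial.degree (Polynomial.C (∏ j, (-(l j)) ^ (r j))) + ((H r).det).degree
          ≤ 0 + ((S - ∑ j, r j : ℕ) : WithBot ℕ) :=
            add_le_add Polynomial.degree_C_le h2
        _ ≤ (D : WithBot ℕ) := by rw [zero_add]; exact_mod_cast h3
    · obtain ⟨a, b, hab, hne⟩ := Function.not_injective_iff.1 hrinj
      have hz : (H r).det = 0 :=
        Matrix.det_zero_of_row_eq hne (by funext i; simp only [hHdef, Matrix.of_apply, hab])
      rw [hz, mul_zero, Polynomial.degree_zero]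
      exact bot_le
  -- Part 2 : the coefficient at D
  set e : Equiv.Perm (Fin m) → (Fin m → ℕ) := fun σ j => ((σ j : Fin m) : ℕ) with he
  have einj : Function.Injective e := by
    intro σ σ' h
    ext j
    exact congrFun h j
  have hVT : (Matrix.det (Matrix.of fun i j : Fin m =>
        (R i).comp (Polynomial.X - Polynomial.C (l j)))).coeff D
      = Matrix.det (Matrix.of fun k j : Fin m => (-(l j)) ^ (k : ℕ))
        * Matrix.det (Matrix.of fun k i : Fin m =>
            (((R i).natDegree.choose (k : ℕ) : ℝ) * (R i).leadingCoeff)) := by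
    rw [hdet, Polynomial.finset_sum_coeff]
    have hsub : Finset.univ.image e ⊆ Fintype.piFinset (fun _ : Fin m => Finset.range N) := by
      intro r hr
      rw [Fintype.mem_piFinset]
      intro j
      obtain ⟨σ, _, rfl⟩ := Finset.mem_image.1 hr
      exact Finset.mem_range.2 (lt_of_lt_of_le (σ j).2 (by omega))
    have hvanish : ∀ r ∈ Fintype.piFinset (fun _ : Fin m => Finset.range N),
        r ∉ Finset.univ.image e →
        (Polynomial.C (∏ j, (-(l j)) ^ (r j)) * (H r).det).coeff D = 0 := by
      intro r _ hrim
      by_cases hrinj : Function.Injective r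
      · have h1 : K ≤ ∑ j, r j := (sum_distinct_ge r hrinj).1
        rcases eq_or_lt_of_le h1 with heq | hlt
        · exfalso
          have hlt' : ∀ j, r j < m := (sum_distinct_ge r hrinj).2 heq.symm
          have hinj' : Function.Injective (fun j => (⟨r j, hlt' j⟩ : Fin m)) :=
            fun a b hab => hrinj (congrArg Fin.val hab)
          refine hrim (Finset.mem_image.2
            ⟨Equiv.ofBijective _ (Finite.injective_iff_bijective.1 hinj'),
              Finset.mem_univ _, ?_⟩)
          funext j
          rfl
        · by_cases hSr : ∑ j, r j ≤ S
          · refine Polynomial.coeff_eq_zero_of_degree_lt ?_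
            refine lt_of_le_of_lt ((Polynomial.degree_mul_le _ _).trans
              (add_le_add Polynomial.degree_C_le (det_hasse_degree_le R r))) ?_
            rw [zero_add]
            exact_mod_cast (show (S - ∑ j, r j : ℕ) < D by omega)
          · push_neg at hSr
            rw [show (H r).det = 0 from det_hasse_zero R r hSr, mul_zero,
              Polynomial.coeff_zero]
      · obtain ⟨a, b, hab, hne⟩ := Function.not_injective_iff.1 hrinj
        rw [show (H r).det = 0 from Matrix.det_zero_of_row_eq hne
          (by funext i; simp only [hHdef, Matrix.of_apply, hab]), mul_zero,
          Polynomial.coeff_zero]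
    rw [← Finset.sum_subset hsub (fun r h1 h2 => hvanish r h1 h2)]
    rw [Finset.sum_image (fun σ _ σ' _ h => einj h)]
    have hperm : ∀ σ : Equiv.Perm (Fin m),
        (Polynomial.C (∏ j, (-(l j)) ^ (e σ j)) * (H (e σ)).det).coeff D
        = (((Equiv.Perm.sign σ : ℤ) : ℝ) * ∏ j, (-(l j)) ^ ((σ j : Fin m) : ℕ))
          * Matrix.det (Matrix.of fun k i : Fin m =>
              (((R i).natDegree.choose (k : ℕ) : ℝ) * (R i).leadingCoeff)) := by
      intro σ
      have hsub2 : H (e σ) = (Matrix.of fun k i : Fin m =>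
          Polynomial.hasseDeriv (k : ℕ) (R i)).submatrix σ id := rfl
      rw [hsub2, Matrix.det_permute, Polynomial.coeff_C_mul]
      have hsgn : ((Equiv.Perm.sign σ : ℤ) : ℝ[X])
          = Polynomial.C (((Equiv.Perm.sign σ : ℤ) : ℝ)) := by
        rw [Polynomial.C_eq_intCast]
      rw [show ((Equiv.Perm.sign σ : ℤˣ) : ℝ[X]) * (Matrix.of fun k i : Fin m =>
          Polynomial.hasseDeriv (k : ℕ) (R i)).det
          = Polynomial.C (((Equiv.Perm.sign σ : ℤ) : ℝ)) * (Matrix.of fun k i : Fin m =>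
            Polynomial.hasseDeriv (k : ℕ) (R i)).det from by rw [← hsgn],
        Polynomial.coeff_C_mul, coeff_det_G' R]
      ring
    rw [Finset.sum_congr rfl (fun σ _ => hperm σ)]
    have hVdet : Matrix.det (Matrix.of fun k j : Fin m => (-(l j)) ^ (k : ℕ))
        = ∑ σ : Equiv.Perm (Fin m), ((Equiv.Perm.sign σ : ℤ) : ℝ)
            * ∏ j, (-(l j)) ^ ((σ j : Fin m) : ℕ) := Matrix.det_apply' _
    rw [hVdet, Finset.sum_mul]
  -- the two determinants are nonzero
  have hVne : Matrix.det (Matrix.of fun k j : Fin m => (-(l j)) ^ (k : ℕ)) ≠ 0 := by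
    have hv : (Matrix.of fun k j : Fin m => (-(l j)) ^ (k : ℕ))
        = (Matrix.vandermonde fun j => -(l j)).transpose := rfl
    rw [hv, Matrix.det_transpose, Matrix.det_vandermonde]
    refine Finset.prod_ne_zero_iff.2 fun i _ => Finset.prod_ne_zero_iff.2 fun j hj => ?_
    have hij : i ≠ j := ne_of_lt (Finset.mem_Ioi.1 hj)
    refine sub_ne_zero.2 fun h => hij (hl ?_)
    exact neg_injective h.symm
  exact Polynomial.degree_eq_of_le_of_coeff_ne_zero hdegle
    (by rw [hVT]; exact mul_ne_zero hVne (detT_ne R hR0 dinj))
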